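/- arXiv:2505.14046 — 7 statements merged into one kernel-verified Lean document; each statement's English description precedes it below -/
import Mathlib

section
/- Let G be a temporal graph with n ≥ 2 vertices, lifetime T, and connected underlying graph, such that every edge has frequency at most f, and suppose T ≥ f(2n−3). Then from any starting vertex v there exists a temporal walk exploring G (visiting every vertex) whose final timestep is at most f(2n−3). -/
/-- A temporal graph on vertex type `V`: timesteps `1, …, T`, with `active t e`
meaning the undirected edge `e` is active at timestep `t`. -/
structure TemporalGraph (V : Type) where
  T : ℕ
  active : ℕ → Sym2 V → Prop

namespace TemporalGraph

variable {V : Type}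

/-- Edge `e` has frequency at most `f`: it is active at least once in every
window of `f` consecutive timesteps within `[1, T]`. -/
def FreqLE (G : TemporalGraph V) (e : Sym2 V) (f : ℕ) : Prop :=
  0 < f ∧ ∀ t, 1 ≤ t → t + f ≤ G.T + 1 → ∃ s ∈ Finset.Ico t (t + f), G.active s e

/-- The frequency of an edge: the least `f` such that `e` is active at least
once in every `f` consecutive timesteps. -/
noncomputable def freq (G : TemporalGraph V) (e : Sym2 V) : ℕ :=
  sInf {f | G.FreqLE e f}

/-- Edge `e` is `r`-regular. -/
def Regular (G : TemporalGraph V) (e : Sym2 V) (r : ℕ) : Prop :=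
  0 < r ∧ ∀ t, r + 1 ≤ t → t + r ≤ G.T →
    ((G.active (t - r) e ↔ G.active t e) ∧ (G.active t e ↔ G.active (t + r) e))

/-- The underlying (static) graph of a temporal graph. -/
def underlying (G : TemporalGraph V) : SimpleGraph V where
  Adj u v := u ≠ v ∧ ∃ t ∈ Finset.Icc 1 G.T, G.active t s(u, v)
  symm := by
    constructor
    intro u v h
    refine ⟨h.1.symm, ?_⟩
    rw [Sym2.eq_swap]
    exact h.2
  loopless := ⟨fun v h => h.1 rfl⟩

/-- A temporal walk starting at `start`, given by vertices `vs 0, …, vs m` and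
strictly increasing timesteps `ts 0 < … < ts (m-1)`, each step using an edge
active at its timestep. -/
structure TWalk (G : TemporalGraph V) (start : V) where
  m : ℕ
  vs : Fin (m + 1) → V
  ts : Fin m → ℕ
  start_eq : vs 0 = start
  mono : StrictMono ts
  time_ge : ∀ i, 1 ≤ ts i
  time_le : ∀ i, ts i ≤ G.T
  steps : ∀ i : Fin m, G.active (ts i) s(vs i.castSucc, vs i.succ)

/-- A temporal walk explores the graph if every vertex is visited. -/
def TWalk.Explores {G : TemporalGraph V} {start : V} (w : G.TWalk start) : Prop :=
  Function.Surjective w.vs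

/-- The length of a temporal walk: its final timestep. -/
def TWalk.length {G : TemporalGraph V} {start : V} (w : G.TWalk start) : ℕ :=
  Finset.univ.sup w.ts

end TemporalGraph

section Aux

open SimpleGraph

private lemma exists_adj_of_ne {V : Type} {G : SimpleGraph V} (hconn : G.Connected)
    {a b : V} (hne : a ≠ b) : ∃ c, G.Adj a c := by
  obtain ⟨p⟩ := hconn a b
  have hl : 0 < p.length := Nat.pos_of_ne_zero fun h0 => hne (p.eq_of_length_eq_zero h0)
  exact ⟨p.getVert 1, by simpa using p.adj_getVert_succ hl⟩

private lemma induce_reachable_aux {V : Type} {G : SimpleGraph V} {s : Set V} :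
    ∀ {a b : V} (p : G.Walk a b), (∀ x ∈ p.support, x ∈ s) →
      ∀ (ha : a ∈ s) (hb : b ∈ s), (G.induce s).Reachable ⟨a, ha⟩ ⟨b, hb⟩ := by
  intro a b p
  induction p with
  | nil => intro _ ha hb; exact Reachable.refl _
  | @cons a c b h q ih =>
    intro hs ha hb
    have hc : c ∈ s := hs c (by simp)
    have hadj : (G.induce s).Adj ⟨a, ha⟩ ⟨c, hc⟩ := h
    exact hadj.reachable.trans (ih (fun x hx => hs x (by simp [hx])) hc hb)

private lemma cover_walk : ∀ (n : ℕ) (V : Type) [Fintype V], n = Fintype.card V → 2 ≤ n →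
    ∀ (G : SimpleGraph V), G.Connected → ∀ v : V,
    ∃ (u : V) (p : G.Walk v u), u ≠ v ∧ (∀ x : V, x ∈ p.support) ∧ p.length ≤ 2 * n - 3 := by
  intro n
  induction n using Nat.strong_induction_on with
  | _ n ih =>
    intro V _ hn h2 G hconn v
    classical
    rcases eq_or_lt_of_le h2 with h2' | h3
    · -- n = 2
      obtain ⟨u, hu⟩ := Fintype.exists_ne_of_one_lt_card (by omega) v
      have key : ∀ a b : V, a ≠ v → b ≠ v → a = b := by
        intro a b ha hb
        by_contra hab
        have h3' : ({v, a, b} : Finset V).card = 3 := by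
          rw [Finset.card_insert_of_notMem (by simp [Ne.symm ha, Ne.symm hb]),
              Finset.card_insert_of_notMem (by simp [hab]), Finset.card_singleton]
        have hle := Finset.card_le_univ ({v, a, b} : Finset V)
        rw [h3'] at hle
        omega
      obtain ⟨c, hc⟩ := exists_adj_of_ne hconn (Ne.symm hu)
      have hcu : c = u := key c u hc.ne' hu
      subst hcu
      refine ⟨c, Walk.cons hc Walk.nil, hu, ?_, ?_⟩
      · intro x
        by_cases hx : x = v
        · simp [hx]
        · have := key x c hx hu; simp [this]
      · have hl : (Walk.cons hc Walk.nil).length = 1 := by simp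
        omega
    · -- 3 ≤ n
      obtain ⟨u, -, hmax0⟩ := Finset.exists_max_image Finset.univ (G.dist v)
        ⟨v, Finset.mem_univ v⟩
      have hmax : ∀ x : V, G.dist v x ≤ G.dist v u := fun x => hmax0 x (Finset.mem_univ x)
      obtain ⟨w0, hw0⟩ := Fintype.exists_ne_of_one_lt_card (by omega) v
      have huv : u ≠ v := by
        intro h; subst h
        have h1 := hconn.pos_dist_of_ne (Ne.symm hw0)
        have h4 := hmax w0
        rw [SimpleGraph.dist_self] at h4
        omega
      have avoid : ∀ w : V, w ≠ u → ∃ p : G.Walk v w, u ∉ p.support := by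
        intro w hw
        obtain ⟨p, hp⟩ := (hconn v w).exists_walk_length_eq_dist
        refine ⟨p, fun hu => hw ?_⟩
        have hsplit := congrArg Walk.length (Walk.take_spec p hu)
        rw [Walk.length_append] at hsplit
        have h1 : G.dist v u ≤ (p.takeUntil u hu).length := SimpleGraph.dist_le _
        have h4 := hmax w
        have h2 : (p.dropUntil u hu).length = 0 := by omega
        exact (Walk.eq_of_length_eq_zero h2).symm
      set s : Set V := {x | x ≠ u} with hsdef
      have hvs : v ∈ s := Ne.symm huv
      have hcard : Fintype.card s = n - 1 := by
        have h5 : Fintype.card {x : V // ¬ x = u} =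
            Fintype.card V - Fintype.card {x : V // x = u} := Fintype.card_subtype_compl _
        rw [Fintype.card_subtype_eq] at h5
        have h6 : Fintype.card s = Fintype.card {x : V // ¬ x = u} :=
          Fintype.card_congr (Equiv.subtypeEquivRight fun _ => Iff.rfl)
        rw [h6, h5, ← hn]
      have hconn' : (G.induce s).Connected := by
        rw [SimpleGraph.connected_iff]
        refine ⟨?_, ⟨⟨v, hvs⟩⟩⟩
        rintro ⟨a, ha⟩ ⟨b, hb⟩
        obtain ⟨p1, hp1⟩ := avoid a ha
        obtain ⟨p2, hp2⟩ := avoid b hb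
        have hsup : ∀ x ∈ (p1.reverse.append p2).support, x ∈ s := by
          intro x hx hxu
          subst hxu
          rw [Walk.mem_support_append_iff, Walk.support_reverse, List.mem_reverse] at hx
          rcases hx with h | h
          · exact hp1 h
          · exact hp2 h
        exact induce_reachable_aux (p1.reverse.append p2) hsup ha hb
      obtain ⟨u', p', hu'v, hcov, hlen⟩ :=
        ih (n - 1) (by omega) s hcard.symm (by omega) (G.induce s) hconn' ⟨v, hvs⟩
      let hom : G.induce s →g G := (SimpleGraph.Embedding.induce s).toHom
      let p2 : G.Walk v u'.val := p'.map hom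
      obtain ⟨x, hux⟩ := exists_adj_of_ne hconn huv
      have hxu : x ≠ u := hux.ne'
      have hxp : x ∈ p2.support := by
        have hmem := hcov ⟨x, hxu⟩
        show x ∈ (p'.map hom).support
        rw [Walk.support_map]
        exact List.mem_map_of_mem hmem
      let q : G.Walk v u'.val := (p2.takeUntil x hxp).append
        ((Walk.cons hux.symm (Walk.cons hux Walk.nil)).append (p2.dropUntil x hxp))
      refine ⟨u'.val, q, fun h => hu'v (Subtype.ext h), ?_, ?_⟩
      · intro y
        by_cases hy : y = u
        · subst hy
          show y ∈ (Walk.append _ _).support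
          rw [Walk.mem_support_append_iff]
          right
          rw [Walk.mem_support_append_iff]
          left
          simp
        · have hmem : y ∈ p2.support := by
            show y ∈ (p'.map hom).support
            rw [Walk.support_map]
            exact List.mem_map_of_mem (hcov ⟨y, hy⟩)
          rw [← Walk.take_spec p2 hxp, Walk.mem_support_append_iff] at hmem
          show y ∈ (Walk.append _ _).support
          rw [Walk.mem_support_append_iff]
          rcases hmem with h | h
          · exact Or.inl h
          · right
            rw [Walk.mem_support_append_iff]
            exact Or.inr h
      · have hsplit := congrArg Walk.length (Walk.take_spec p2 hxp)
        rw [Walk.length_append] at hsplit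
        have hmap : p2.length = p'.length := Walk.length_map _ p'
        have hq : q.length = (p2.takeUntil x hxp).length +
            (2 + (p2.dropUntil x hxp).length) := by
          show (Walk.append _ _).length = _
          rw [Walk.length_append, Walk.length_append]
          simp
        omega

end Aux

/-- a temporal graph with `n ≥ 2` vertices, connected underlying
graph, every edge of frequency at most `f`, and lifetime `T ≥ f(2n-3)`, can be
explored from any starting vertex by a temporal walk of length at most
`f(2n - 3)`. -/
theorem explore_frequent {V : Type} [Fintype V] (G : TemporalGraph V) (f n : ℕ)
    (hn : n = Fintype.card V) (h2 : 2 ≤ n)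
    (hconn : G.underlying.Connected)
    (hf : ∀ u v : V, G.underlying.Adj u v → G.FreqLE s(u, v) f)
    (hT : f * (2 * n - 3) ≤ G.T) (v : V) :
    ∃ w : G.TWalk v, w.Explores ∧ w.length ≤ f * (2 * n - 3) := by
  classical
  obtain ⟨u, p, -, hcov, hlen⟩ := cover_walk n V hn h2 G.underlying hconn v
  -- f is positive, since there is at least one edge
  obtain ⟨w0, hw0⟩ := Fintype.exists_ne_of_one_lt_card (by omega) v
  obtain ⟨c, hc⟩ := exists_adj_of_ne hconn (Ne.symm hw0)
  have hfpos : 0 < f := (hf v c hc).1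
  have hwin : ∀ i : Fin p.length, ∃ t ∈ Finset.Ico ((i : ℕ) * f + 1) ((i : ℕ) * f + 1 + f),
      G.active t s(p.getVert i, p.getVert ((i : ℕ) + 1)) := by
    intro i
    have hadj := p.adj_getVert_succ i.isLt
    have hi1 : (i : ℕ) + 1 ≤ 2 * n - 3 := by
      have := i.isLt; omega
    have h1 : ((i : ℕ) + 1) * f ≤ (2 * n - 3) * f := Nat.mul_le_mul hi1 (Nat.le_refl f)
    have h2 : (2 * n - 3) * f = f * (2 * n - 3) := Nat.mul_comm _ _
    have h3 : ((i : ℕ) + 1) * f = (i : ℕ) * f + f := Nat.succ_mul _ _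
    have hiw : (i : ℕ) * f + 1 + f ≤ G.T + 1 := by linarith
    exact (hf _ _ hadj).2 _ (Nat.le_add_left 1 _) hiw
  let ts : Fin p.length → ℕ := fun i => (hwin i).choose
  have hts1 : ∀ i : Fin p.length, ts i ∈ Finset.Ico ((i : ℕ) * f + 1) ((i : ℕ) * f + 1 + f) :=
    fun i => (hwin i).choose_spec.1
  have hts2 : ∀ i : Fin p.length, G.active (ts i) s(p.getVert i, p.getVert ((i : ℕ) + 1)) :=
    fun i => (hwin i).choose_spec.2
  have htle : ∀ i : Fin p.length, ts i ≤ f * (2 * n - 3) := by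
    intro i
    have a1 : ts i < (i : ℕ) * f + 1 + f := (Finset.mem_Ico.mp (hts1 i)).2
    have hi1 : (i : ℕ) + 1 ≤ 2 * n - 3 := by
      have := i.isLt; omega
    have h1 : ((i : ℕ) + 1) * f ≤ (2 * n - 3) * f := Nat.mul_le_mul hi1 (Nat.le_refl f)
    have h2 : (2 * n - 3) * f = f * (2 * n - 3) := Nat.mul_comm _ _
    have h3 : ((i : ℕ) + 1) * f = (i : ℕ) * f + f := Nat.succ_mul _ _
    linarith
  refine ⟨⟨p.length, fun i => p.getVert i, ts, ?_, ?_, ?_, ?_, ?_⟩, ?_, ?_⟩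
  · simp
  · intro i j hij
    have hij' : (i : ℕ) < (j : ℕ) := hij
    have a1 : ts i < (i : ℕ) * f + 1 + f := (Finset.mem_Ico.mp (hts1 i)).2
    have a2 : (j : ℕ) * f + 1 ≤ ts j := (Finset.mem_Ico.mp (hts1 j)).1
    have a3 : ((i : ℕ) + 1) * f ≤ (j : ℕ) * f := Nat.mul_le_mul hij' (Nat.le_refl f)
    have a4 : ((i : ℕ) + 1) * f = (i : ℕ) * f + f := Nat.succ_mul _ _
    linarith
  · intro i
    have a2 : (i : ℕ) * f + 1 ≤ ts i := (Finset.mem_Ico.mp (hts1 i)).1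
    exact Nat.le_trans (Nat.le_add_left 1 _) a2
  · intro i
    exact Nat.le_trans (htle i) hT
  · intro i
    simpa using hts2 i
  · intro x
    obtain ⟨k, hk1, hk2⟩ := SimpleGraph.Walk.mem_support_iff_exists_getVert.mp (hcov x)
    exact ⟨⟨k, Nat.lt_succ_of_le hk2⟩, hk1⟩
  · exact Finset.sup_le fun i _ => htle i
end

section
/- Let W = e_1, ..., e_m be a walk in the underlying graph of a temporal graph G, where edge e_i has frequency f_{e_i}, and suppose the lifetime T satisfies T ≥ Σ_{i=1}^m f_{e_i}. Define t_1 as the first timestep in which e_1 is active, and inductively t_i as the first timestep strictly greater than t_{i−1} in which e_i is active. Then all t_i are well-defined and t_m ≤ Σ_{i=1}^m f_{e_i}. -/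
/-- Auxiliary: the edge condition at step `i` (trivially true if `i ≥ m`). -/
def gAct {V : Type} (G : TemporalGraph V) (m : ℕ) (vs : Fin (m + 1) → V)
    (i s : ℕ) : Prop :=
  ∀ h : i < m, G.active s s(vs (⟨i, h⟩ : Fin m).castSucc, vs (⟨i, h⟩ : Fin m).succ)

/-- Auxiliary: the greedy timesteps. -/
noncomputable def greedyT {V : Type} (G : TemporalGraph V) (m : ℕ)
    (vs : Fin (m + 1) → V) : ℕ → ℕ
  | 0 => sInf {s | 0 < s ∧ gAct G m vs 0 s}
  | (k + 1) => sInf {s | greedyT G m vs k < s ∧ gAct G m vs (k + 1) s}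

/-- Auxiliary: the previous greedy timestep (0 for `i = 0`). -/
noncomputable def gPrev {V : Type} (G : TemporalGraph V) (m : ℕ)
    (vs : Fin (m + 1) → V) : ℕ → ℕ
  | 0 => 0
  | (k + 1) => greedyT G m vs k

lemma greedyT_eq {V : Type} (G : TemporalGraph V) (m : ℕ) (vs : Fin (m + 1) → V)
    (i : ℕ) : greedyT G m vs i = sInf {s | gPrev G m vs i < s ∧ gAct G m vs i s} := by
  cases i <;> rfl

/-- along a walk `e_1, …, e_m` in the underlying graph (given by
its vertex sequence `vs`), with edge `e_i` of frequency at most `f i` and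
lifetime `T ≥ Σ f i`, the greedy timesteps (`t_1` the first timestep where
`e_1` is active, and `t_i` the first timestep after `t_{i-1}` where `e_i` is
active) are all well-defined, and `t_m ≤ Σ f i`. -/
theorem greedy_traversal_bound {V : Type} (G : TemporalGraph V) (m : ℕ)
    (vs : Fin (m + 1) → V) (f : Fin m → ℕ)
    (hwalk : ∀ i : Fin m, G.underlying.Adj (vs i.castSucc) (vs i.succ))
    (hf : ∀ i : Fin m, G.FreqLE s(vs i.castSucc, vs i.succ) (f i))
    (hT : ∑ i, f i ≤ G.T) :
    ∃ ts : Fin m → ℕ,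
      StrictMono ts ∧
      (∀ i : Fin m, 1 ≤ ts i ∧ ts i ≤ G.T ∧ G.active (ts i) s(vs i.castSucc, vs i.succ)) ∧
      -- each `ts i` is the *first* suitable timestep after the previous one:
      (∀ i : Fin m, ∀ s, 1 ≤ s → s < ts i →
        (∀ hpos : 0 < (i : ℕ),
          ts ⟨(i : ℕ) - 1, lt_of_le_of_lt (Nat.sub_le _ _) i.isLt⟩ < s) →
        ¬ G.active s s(vs i.castSucc, vs i.succ)) ∧
      (∀ i : Fin m, ts i ≤ ∑ j ∈ Finset.univ.filter (· ≤ i), f j) := by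
  classical
  set t : ℕ → ℕ := greedyT G m vs with htdef
  set pr : ℕ → ℕ := gPrev G m vs with hprdef
  have hteq : ∀ i, t i = sInf {s | pr i < s ∧ gAct G m vs i s} :=
    fun i => greedyT_eq G m vs i
  -- helper: one greedy step
  have step : ∀ i (h : i < m),
      pr i ≤ ∑ j ∈ Finset.univ.filter (fun j : Fin m => (j : ℕ) < i), f j →
      pr i < t i ∧ gAct G m vs i (t i) ∧
        t i ≤ ∑ j ∈ Finset.univ.filter (fun j : Fin m => (j : ℕ) ≤ i), f j := by
    intro i h hpr
    set i' : Fin m := ⟨i, h⟩ with hi'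
    have hins : insert i' (Finset.univ.filter (fun j : Fin m => (j : ℕ) < i))
        = Finset.univ.filter (fun j : Fin m => (j : ℕ) ≤ i) := by
      ext j
      simp [Finset.mem_insert, Fin.ext_iff, hi']
      omega
    have hnotmem : i' ∉ Finset.univ.filter (fun j : Fin m => (j : ℕ) < i) := by
      simp [hi']
    have hsum_le : ∑ j ∈ Finset.univ.filter (fun j : Fin m => (j : ℕ) ≤ i), f j ≤ ∑ j, f j :=
      Finset.sum_le_sum_of_subset (Finset.filter_subset _ _)
    have hsum_eq : ∑ j ∈ Finset.univ.filter (fun j : Fin m => (j : ℕ) < i), f j + f i'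
        = ∑ j ∈ Finset.univ.filter (fun j : Fin m => (j : ℕ) ≤ i), f j := by
      rw [← hins, Finset.sum_insert hnotmem]; ring
    obtain ⟨hfpos, hwin⟩ := hf i'
    have hbound : pr i + f i' ≤ G.T := by
      have := hsum_le.trans hT
      omega
    obtain ⟨s, hsmem, hact⟩ := hwin (pr i + 1) (by omega) (by omega)
    rw [Finset.mem_Ico] at hsmem
    have hsS : s ∈ {s | pr i < s ∧ gAct G m vs i s} := by
      refine ⟨by omega, ?_⟩
      intro h'
      exact hact
    have hne : {s | pr i < s ∧ gAct G m vs i s}.Nonempty := ⟨s, hsS⟩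
    have hmem := Nat.sInf_mem hne
    rw [← hteq] at hmem
    have hle : t i ≤ s := by rw [hteq]; exact Nat.sInf_le hsS
    exact ⟨hmem.1, hmem.2, by omega⟩
  -- main claim by induction
  have main : ∀ i (h : i < m),
      pr i < t i ∧ gAct G m vs i (t i) ∧
        t i ≤ ∑ j ∈ Finset.univ.filter (fun j : Fin m => (j : ℕ) ≤ i), f j := by
    intro i
    induction i with
    | zero =>
      intro h
      exact step 0 h (by simp [hprdef, gPrev])
    | succ k ih =>
      intro h
      have hk := ih (by omega)
      refine step (k + 1) h ?_
      have : (Finset.univ.filter (fun j : Fin m => (j : ℕ) < k + 1))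
          = Finset.univ.filter (fun j : Fin m => (j : ℕ) ≤ k) := by
        ext j; simp
      rw [this]
      show greedyT G m vs k ≤ _
      exact hk.2.2
  -- strict monotonicity on ℕ indices
  have hmono : ∀ b, b < m → ∀ a, a < b → t a < t b := by
    intro b
    induction b with
    | zero => intro _ a ha; omega
    | succ k ih =>
      intro hb a ha
      have hlt : t k < t (k + 1) := (main (k + 1) hb).1
      rcases Nat.lt_succ_iff_lt_or_eq.mp ha with h | h
      · exact lt_trans (ih (by omega) a h) hlt
      · subst h; exact hlt
  refine ⟨fun i => t i, ?_, ?_, ?_, ?_⟩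
  · intro a b hab
    exact hmono b b.isLt a (Fin.lt_def.mp hab)
  · intro i
    obtain ⟨h1, h2, h3⟩ := main i i.isLt
    have hsum_le : ∑ j ∈ Finset.univ.filter (fun j : Fin m => (j : ℕ) ≤ (i : ℕ)), f j
        ≤ ∑ j, f j := Finset.sum_le_sum_of_subset (Finset.filter_subset _ _)
    refine ⟨?_, ?_, ?_⟩
    · show 1 ≤ t (i : ℕ); omega
    · show t (i : ℕ) ≤ G.T; omega
    · show G.active (t (i : ℕ)) _
      exact h2 i.isLt
  · intro i s hs1 hslt hprev
    intro hact
    have hnot : s ∉ {s | pr (i : ℕ) < s ∧ gAct G m vs (i : ℕ) s} := by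
      apply Nat.notMem_of_lt_sInf
      rw [← hteq]
      exact hslt
    apply hnot
    constructor
    · rcases Nat.eq_zero_or_pos (i : ℕ) with h0 | h0
      · rw [h0]; show gPrev G m vs 0 < s; simpa [gPrev] using (show 0 < s by omega)
      · have := hprev h0
        obtain ⟨k, hk⟩ : ∃ k, (i : ℕ) = k + 1 := ⟨(i : ℕ) - 1, by omega⟩
        rw [hk]
        show greedyT G m vs k < s
        have : t ((i : ℕ) - 1) < s := this
        rw [hk] at this
        simpa using this
    · intro h'
      have : (⟨(i : ℕ), h'⟩ : Fin m) = i := rfl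
      rw [this]
      exact hact
  · intro i
    have h3 := (main i i.isLt).2.2
    have : Finset.univ.filter (fun j : Fin m => (j : ℕ) ≤ (i : ℕ))
        = Finset.univ.filter (· ≤ i) := by
      ext j; simp only [Finset.mem_filter, Fin.le_def]
    rw [this] at h3
    exact h3
end

section
/- For every r ≥ 1 and n ≥ 3, there exists an r-regular temporal graph on n vertices (namely a temporally scheduled star) and a starting vertex such that every temporal walk exploring the graph from that vertex has length at least r(2n − 5) + 1. -/
-- auxiliary
def starG (r n : ℕ) (hn : 3 ≤ n) : TemporalGraph (Fin n) where
  T := r * (2 * n - 1)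
  active t e := (⟨0, by omega⟩ : Fin n) ∈ e ∧
    (e = s((⟨0, by omega⟩ : Fin n), (⟨1, by omega⟩ : Fin n)) ∨ t % r = 1 % r)

lemma starG_active {r n : ℕ} (hn : 3 ≤ n) (t : ℕ) (e : Sym2 (Fin n)) :
    (starG r n hn).active t e ↔ ((⟨0, by omega⟩ : Fin n) ∈ e ∧
    (e = s((⟨0, by omega⟩ : Fin n), (⟨1, by omega⟩ : Fin n)) ∨ t % r = 1 % r)) := Iff.rfl

def fN (x : ℕ) : ℕ := if x = 0 then 1 else if x % 2 = 1 then 0 else x / 2 + 1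

lemma fN_odd {x : ℕ} (h : x % 2 = 1) : fN x = 0 := by unfold fN; split_ifs <;> omega
lemma fN_even {x : ℕ} (h0 : x ≠ 0) (h : x % 2 = 0) : fN x = x / 2 + 1 := by
  unfold fN; split_ifs <;> omega
lemma fN_zero : fN 0 = 1 := rfl

def expWalk (r n : ℕ) (hr : 1 ≤ r) (hn : 3 ≤ n) :
    (starG r n hn).TWalk (⟨1, by omega⟩ : Fin n) where
  m := 2 * n - 4
  vs k := ⟨fN k.val, by have := k.isLt; unfold fN; split_ifs <;> omega⟩
  ts i := i.val * r + 1
  start_eq := rfl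
  mono := fun i j h => by
    have h' : (i : ℕ) < j := h
    have : (i : ℕ) * r < (j : ℕ) * r := Nat.mul_lt_mul_of_lt_of_le h' le_rfl hr
    show (i : ℕ) * r + 1 < (j : ℕ) * r + 1
    omega
  time_ge i := Nat.le_add_left 1 _
  time_le i := by
    have hi : (i : ℕ) + 1 ≤ 2 * n - 1 := by have := i.isLt; omega
    calc (i : ℕ) * r + 1 ≤ (i : ℕ) * r + r := by omega
    _ = ((i : ℕ) + 1) * r := by ring
    _ ≤ (2 * n - 1) * r := Nat.mul_le_mul_right r hi
    _ = r * (2 * n - 1) := Nat.mul_comm _ _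
  steps i := by
    refine ⟨?_, Or.inr ?_⟩
    · rw [Sym2.mem_iff]
      by_cases h : (i : ℕ) % 2 = 1
      · left
        exact Fin.ext (show (0 : ℕ) = fN (i : ℕ) from (fN_odd h).symm)
      · right
        exact Fin.ext (show (0 : ℕ) = fN ((i : ℕ) + 1) from (fN_odd (by omega)).symm)
    · show ((i:ℕ)*r+1) % r = 1 % r
      rw [Nat.add_comm, Nat.add_mul_mod_self_right]

lemma expWalk_explores (r n : ℕ) (hr : 1 ≤ r) (hn : 3 ≤ n) :
    (expWalk r n hr hn).Explores := by
  intro v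
  have hm : (expWalk r n hr hn).m = 2 * n - 4 := rfl
  by_cases h1 : v.val = 1
  · exact ⟨⟨0, by omega⟩, Fin.ext (show fN 0 = v.val by rw [fN_zero, h1])⟩
  by_cases h0 : v.val = 0
  · exact ⟨⟨1, by omega⟩, Fin.ext (show fN 1 = v.val by rw [fN_odd (by norm_num), h0])⟩
  · have h2 : 2 ≤ v.val := by omega
    have hlt := v.isLt
    refine ⟨⟨2 * (v.val - 1), by omega⟩, Fin.ext ?_⟩
    show fN (2 * (v.val - 1)) = v.val
    rw [fN_even (by omega) (by omega)]
    omega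


/-- for every `r ≥ 1` and `n ≥ 3` there is an `r`-regular temporal
graph on `n` vertices (a temporally scheduled star) and a starting vertex such
that the graph is explorable, but every exploring temporal walk from that
vertex has length at least `r(2n - 5) + 1`. -/
theorem regular_lower_bound (r n : ℕ) (hr : 1 ≤ r) (hn : 3 ≤ n) :
    ∃ G : TemporalGraph (Fin n),
      (∀ u v : Fin n, G.underlying.Adj u v → ∃ r' ≤ r, G.Regular s(u, v) r') ∧
      ∃ start : Fin n,
        (∃ w : G.TWalk start, w.Explores) ∧
        ∀ w : G.TWalk start, w.Explores → r * (2 * n - 5) + 1 ≤ w.length := by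
  refine ⟨starG r n hn, ?_, ⟨1, by omega⟩,
    ⟨expWalk r n hr hn, expWalk_explores r n hr hn⟩, ?_⟩
  · rintro u v -
    refine ⟨r, le_rfl, hr, fun t ht1 ht2 => ?_⟩
    have h1 : (t - r) % r = t % r := by
      conv_rhs => rw [← Nat.sub_add_cancel (show r ≤ t by omega)]
      rw [Nat.add_mod_right]
    have h2 : (t + r) % r = t % r := Nat.add_mod_right t r
    constructor
    · simp only [starG_active hn]
      rw [h1]
    · simp only [starG_active hn]
      rw [h2]
  · intro w hw
    classical
    have hn0 : 0 < n := by omega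
    have hn1 : 1 < n := by omega
    -- every step has ⟨0,hn0⟩ as an endpoint
    have hmem0 : ∀ i : Fin w.m,
        w.vs i.castSucc = ⟨0, hn0⟩ ∨ w.vs i.succ = ⟨0, hn0⟩ := by
      intro i
      have h := (w.steps i).1
      rw [Sym2.mem_iff] at h
      rcases h with h | h
      · exact Or.inl (by rw [← h])
      · exact Or.inr (by rw [← h])
    have L1 : ∀ i : Fin w.m, (2 ≤ (w.vs i.castSucc).val ∨ 2 ≤ (w.vs i.succ).val) →
        w.ts i % r = 1 % r ∧ 2 ≤ w.ts i := by
      intro i hi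
      obtain ⟨hmem, hor⟩ := w.steps i
      have hne : ¬ (s(w.vs i.castSucc, w.vs i.succ)
          = s((⟨0, by omega⟩ : Fin n), (⟨1, by omega⟩ : Fin n))) := by
        intro he
        rw [Sym2.eq_iff] at he
        rcases he with ⟨ha, hb⟩ | ⟨ha, hb⟩
        · have ea : (w.vs i.castSucc).val = 0 := congrArg Fin.val ha
          have eb : (w.vs i.succ).val = 1 := congrArg Fin.val hb
          omega
        · have ea : (w.vs i.castSucc).val = 1 := congrArg Fin.val ha
          have eb : (w.vs i.succ).val = 0 := congrArg Fin.val hb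
          omega
      have hmod := hor.resolve_left hne
      have hi0 : (i : ℕ) ≠ 0 := by
        intro h0
        have hc : i.castSucc = (0 : Fin (w.m + 1)) := Fin.ext h0
        have hst : w.vs i.castSucc = ⟨1, by omega⟩ := by rw [hc, w.start_eq]
        have e1 : (w.vs i.castSucc).val = 1 := congrArg Fin.val hst
        rcases hmem0 i with h | h
        · have e2 : (w.vs i.castSucc).val = 0 := congrArg Fin.val h
          omega
        · have e2 : (w.vs i.succ).val = 0 := congrArg Fin.val h
          omega
      refine ⟨hmod, ?_⟩
      have h0m : 0 < w.m := i.pos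
      have hlt : (⟨0, h0m⟩ : Fin w.m) < i := by
        rw [Fin.lt_def]
        show 0 < (i : ℕ)
        omega
      exact Nat.lt_of_le_of_lt (w.time_ge ⟨0, h0m⟩) (w.mono hlt)
    set Sv : Fin n → Finset (Fin w.m) := fun v =>
      Finset.univ.filter (fun i => w.vs i.castSucc = v ∨ w.vs i.succ = v) with hSv
    set S : Finset (Fin w.m) :=
      Finset.univ.filter (fun i => 2 ≤ (w.vs i.castSucc).val ∨ 2 ≤ (w.vs i.succ).val) with hS
    set F : Finset (Fin n) := Finset.univ.filter (fun v => 2 ≤ v.val) with hF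
    have hFcard : n - 2 ≤ F.card := by
      have h1 : (Finset.univ.filter (fun v : Fin n => ¬ 2 ≤ v.val))
          ⊆ {(⟨0, hn0⟩ : Fin n), ⟨1, hn1⟩} := by
        intro v hv
        have hv2 := (Finset.mem_filter.mp hv).2
        simp only [Finset.mem_insert, Finset.mem_singleton]
        rcases (show v.val = 0 ∨ v.val = 1 by omega) with h | h
        · exact Or.inl (Fin.ext h)
        · exact Or.inr (Fin.ext h)
      have h2 := Finset.card_le_card h1
      have h3 : ({(⟨0, hn0⟩ : Fin n), ⟨1, hn1⟩} : Finset (Fin n)).card ≤ 2 :=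
        (Finset.card_insert_le _ _).trans (by simp)
      have h4 := Finset.card_filter_add_card_filter_not
        (s := (Finset.univ : Finset (Fin n))) (p := fun v : Fin n => 2 ≤ v.val)
      have h5 : (Finset.univ : Finset (Fin n)).card = n := by simp
      rw [hF]; omega
    have hdisj : ∀ v ∈ F, ∀ v' ∈ F, v ≠ v' → Disjoint (Sv v) (Sv v') := by
      intro v hv v' hv' hne
      rw [Finset.disjoint_left]
      intro i hiv hiv'
      have hv2 : 2 ≤ v.val := (Finset.mem_filter.mp hv).2
      have hv2' : 2 ≤ v'.val := (Finset.mem_filter.mp hv').2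
      have hnev : v.val ≠ v'.val := fun h => hne (Fin.ext h)
      have hA := (Finset.mem_filter.mp hiv).2
      have hB := (Finset.mem_filter.mp hiv').2
      rcases hmem0 i with h0 | h0 <;> rcases hA with h | h <;> rcases hB with h' | h' <;>
      · have e0 : (0 : ℕ) = _ := (congrArg Fin.val h0).symm
        have e1 := congrArg Fin.val h
        have e2 := congrArg Fin.val h'
        omega
    have hone : ∀ v : Fin n, 2 ≤ v.val → 1 ≤ (Sv v).card := by
      intro v hv2
      obtain ⟨j, hj⟩ := hw v
      have hj0 : j ≠ 0 := by
        intro h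
        rw [h, w.start_eq] at hj
        have e : (1 : ℕ) = v.val := congrArg Fin.val hj
        omega
      obtain ⟨i, hi⟩ := Fin.eq_succ_of_ne_zero hj0
      refine Finset.card_pos.mpr ⟨i, Finset.mem_filter.mpr ⟨Finset.mem_univ _, Or.inr ?_⟩⟩
      rw [← hi]; exact hj
    have htwo : ∀ v : Fin n, 2 ≤ v.val → v ≠ w.vs (Fin.last w.m) → 2 ≤ (Sv v).card := by
      intro v hv2 hvl
      obtain ⟨j, hj⟩ := hw v
      have hj0 : j ≠ 0 := by
        intro h
        rw [h, w.start_eq] at hj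
        have e : (1 : ℕ) = v.val := congrArg Fin.val hj
        omega
      have hjl : j ≠ Fin.last w.m := by
        intro h; rw [h] at hj; exact hvl hj.symm
      obtain ⟨i, hi⟩ := Fin.eq_succ_of_ne_zero hj0
      have hjv : (j : ℕ) < w.m := by
        have h1 := j.isLt
        have h2 : (j : ℕ) ≠ w.m := by
          intro h; exact hjl (Fin.ext (by simp [Fin.last, h]))
        omega
      have hik : i ≠ (⟨j.val, hjv⟩ : Fin w.m) := by
        intro h
        have e1 : (j : ℕ) = (i : ℕ) + 1 := congrArg Fin.val hi
        have e2 : (i : ℕ) = (j : ℕ) := congrArg Fin.val h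
        omega
      have hsub : ({i, ⟨j.val, hjv⟩} : Finset (Fin w.m)) ⊆ Sv v := by
        intro x hx
        rcases Finset.mem_insert.mp hx with h | h
        · subst h
          exact Finset.mem_filter.mpr ⟨Finset.mem_univ _, Or.inr (by rw [← hi]; exact hj)⟩
        · rw [Finset.mem_singleton] at h
          subst h
          refine Finset.mem_filter.mpr ⟨Finset.mem_univ _, Or.inl ?_⟩
          have hk : (⟨j.val, hjv⟩ : Fin w.m).castSucc = j := Fin.ext rfl
          rw [hk]; exact hj
      calc 2 = ({i, ⟨j.val, hjv⟩} : Finset (Fin w.m)).card := (Finset.card_pair hik).symm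
        _ ≤ (Sv v).card := Finset.card_le_card hsub
    have hsum : 2 * F.card - 1 ≤ ∑ v ∈ F, (Sv v).card := by
      by_cases hl : w.vs (Fin.last w.m) ∈ F
      · have herase : ∀ v ∈ F.erase (w.vs (Fin.last w.m)), 2 ≤ (Sv v).card := fun v hv =>
          htwo v ((Finset.mem_filter.mp (Finset.mem_of_mem_erase hv)).2)
            (Finset.ne_of_mem_erase hv)
        have h1 := Finset.card_nsmul_le_sum (F.erase (w.vs (Fin.last w.m)))
          (fun v => (Sv v).card) 2 herase
        have h2 : ∑ v ∈ F.erase (w.vs (Fin.last w.m)), (Sv v).card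
            + (Sv (w.vs (Fin.last w.m))).card = ∑ v ∈ F, (Sv v).card :=
          Finset.sum_erase_add F (fun v => (Sv v).card) hl
        have h3 := hone _ (Finset.mem_filter.mp hl).2
        have h4 := Finset.card_erase_of_mem hl
        have h5 : 1 ≤ F.card := Finset.card_pos.mpr ⟨_, hl⟩
        rw [smul_eq_mul] at h1
        omega
      · have h1 := Finset.card_nsmul_le_sum F (fun v => (Sv v).card) 2
          (fun v hv => htwo v (Finset.mem_filter.mp hv).2 (fun h => hl (h ▸ hv)))
        rw [smul_eq_mul] at h1
        omega
    have hSsub : F.biUnion Sv ⊆ S := by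
      intro i hi
      obtain ⟨v, hvF, hiv⟩ := Finset.mem_biUnion.mp hi
      have hv2 := (Finset.mem_filter.mp hvF).2
      rcases (Finset.mem_filter.mp hiv).2 with h | h
      · exact Finset.mem_filter.mpr ⟨Finset.mem_univ _, Or.inl (by rw [h]; exact hv2)⟩
      · exact Finset.mem_filter.mpr ⟨Finset.mem_univ _, Or.inr (by rw [h]; exact hv2)⟩
    have hcardS : 2 * n - 5 ≤ S.card := by
      have hb := Finset.card_biUnion hdisj
      have hc := Finset.card_le_card hSsub
      omega
    set Tst : Finset ℕ := S.image (fun i => w.ts i) with hTst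
    have hTcard : Tst.card = S.card := Finset.card_image_of_injective S w.mono.injective
    have hTprop : ∀ t ∈ Tst, t % r = 1 % r ∧ 2 ≤ t := by
      intro t ht
      obtain ⟨i, hiS, rfl⟩ := Finset.mem_image.mp ht
      exact L1 i (Finset.mem_filter.mp hiS).2
    have hrec : ∀ t ∈ Tst, t = r * ((t - 1) / r) + 1 := by
      intro t ht
      obtain ⟨hmod, h2⟩ := hTprop t ht
      have hdvd : r ∣ (t - 1) :=
        (Nat.modEq_iff_dvd' (by omega)).mp (show 1 ≡ t [MOD r] from hmod.symm)
      have := Nat.mul_div_cancel' hdvd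
      omega
    set A : Finset ℕ := Tst.image (fun t => (t - 1) / r) with hA
    have hAcard : A.card = Tst.card :=
      Finset.card_image_of_injOn (fun t ht s hs h => by
        rw [hrec t ht, hrec s hs, h])
    have hA1 : ∀ a ∈ A, 1 ≤ a := by
      intro a ha
      obtain ⟨t, ht, rfl⟩ := Finset.mem_image.mp ha
      obtain ⟨hmod, h2⟩ := hTprop t ht
      have hre := hrec t ht
      rcases Nat.eq_zero_or_pos ((t - 1) / r) with h0 | h1
      · rw [h0, Nat.mul_zero] at hre; omega
      · exact h1
    have hAne : A.Nonempty := Finset.card_pos.mp (by omega)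
    have hse : A ⊆ Finset.Icc 1 (A.max' hAne) := fun a ha =>
      Finset.mem_Icc.mpr ⟨hA1 a ha, Finset.le_max' A a ha⟩
    have hMc : A.card ≤ A.max' hAne := by
      have := Finset.card_le_card hse
      rwa [Nat.card_Icc, Nat.add_sub_cancel] at this
    obtain ⟨t, htT, hta⟩ := Finset.mem_image.mp (A.max'_mem hAne)
    obtain ⟨i, hiS, hti⟩ := Finset.mem_image.mp htT
    have hbound : r * (2 * n - 5) + 1 ≤ t := by
      have h1 := hrec t htT
      have h2 : 2 * n - 5 ≤ (t - 1) / r := by omega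
      have h3 := Nat.mul_le_mul_left r h2
      omega
    have hlen : t ≤ w.length := by
      rw [← hti]
      exact Finset.le_sup (Finset.mem_univ i)
    omega
end

section
/- In the temporal star graph on n ≥ 3 vertices where all edges are active at timesteps t ≡ 1 (mod r) and only the edge (v_1, v_2) is active otherwise, any temporal walk starting at v_2 that explores the graph must traverse at least 2n − 5 edges, and between any two consecutive traversals of edges both incident to the center v_1, at least r timesteps must elapse (apart from traversals of (v_1,v_2) at non-congruent timesteps). -/
/-- in the temporal star on `n ≥ 3` vertices (center `v₁ = 0`,
all edges active at timesteps `t ≡ 1 (mod r)`, only the edge `(v₁, v₂)` active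
otherwise), any exploring temporal walk starting at `v₂ = 1` traverses at least
`2n - 5` edges, and between any two consecutive traversals of edges other than
`(v₁, v₂)`-at-non-congruent-timesteps at least `r` timesteps elapse. -/
theorem star_walk_structure (n r : ℕ) (hn : 3 ≤ n) (hr : 1 ≤ r)
    (G : TemporalGraph (Fin n))
    (hact : ∀ t (e : Sym2 (Fin n)), G.active t e ↔
      (1 ≤ t ∧ t ≤ G.T ∧
        ((t % r = 1 % r ∧ ∃ i : Fin n, i ≠ ⟨0, by omega⟩ ∧ e = s((⟨0, by omega⟩ : Fin n), i)) ∨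
          e = s((⟨0, by omega⟩ : Fin n), (⟨1, by omega⟩ : Fin n)))))
    (w : G.TWalk (⟨1, by omega⟩ : Fin n)) (hw : w.Explores) :
    2 * n - 5 ≤ w.m ∧
    ∀ i j : Fin w.m, (i : ℕ) + 1 = (j : ℕ) →
      s(w.vs i.castSucc, w.vs i.succ) ≠ s((⟨0, by omega⟩ : Fin n), (⟨1, by omega⟩ : Fin n)) →
      s(w.vs j.castSucc, w.vs j.succ) ≠ s((⟨0, by omega⟩ : Fin n), (⟨1, by omega⟩ : Fin n)) →
      w.ts i + r ≤ w.ts j := by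
  have h01 : (⟨1, by omega⟩ : Fin n) ≠ (⟨0, by omega⟩ : Fin n) := by
    simp [Fin.ext_iff]
  -- every step has exactly one endpoint equal to the center
  have key : ∀ i : Fin w.m,
      (w.vs i.castSucc = ⟨0, by omega⟩ ∧ w.vs i.succ ≠ ⟨0, by omega⟩) ∨
      (w.vs i.castSucc ≠ ⟨0, by omega⟩ ∧ w.vs i.succ = ⟨0, by omega⟩) := by
    intro i
    have h := (hact _ _).mp (w.steps i)
    have hx : ∃ x : Fin n, x ≠ ⟨0, by omega⟩ ∧
        s(w.vs i.castSucc, w.vs i.succ) = s((⟨0, by omega⟩ : Fin n), x) := by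
      rcases h.2.2 with ⟨_, x, hx0, hxe⟩ | he
      · exact ⟨x, hx0, hxe⟩
      · exact ⟨⟨1, by omega⟩, h01, he⟩
    rcases hx with ⟨x, hx0, hxe⟩
    rw [Sym2.eq_iff] at hxe
    rcases hxe with ⟨ha, hb⟩ | ⟨ha, hb⟩
    · exact Or.inl ⟨ha, by rw [hb]; exact hx0⟩
    · exact Or.inr ⟨by rw [ha]; exact hx0, hb⟩
  -- parity: center exactly at odd positions
  have hpar : ∀ k (hk : k < w.m + 1),
      (w.vs ⟨k, hk⟩ = ⟨0, by omega⟩ ↔ k % 2 = 1) := by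
    intro k
    induction k with
    | zero =>
      intro hk
      have : (⟨0, hk⟩ : Fin (w.m + 1)) = 0 := rfl
      rw [this, w.start_eq]
      simp [h01]
    | succ k ih =>
      intro hk
      have hk' : k < w.m := by omega
      have hedge := key ⟨k, hk'⟩
      have hcs : (⟨k, hk'⟩ : Fin w.m).castSucc = ⟨k, by omega⟩ := rfl
      have hsc : (⟨k, hk'⟩ : Fin w.m).succ = ⟨k + 1, hk⟩ := rfl
      rw [hcs, hsc] at hedge
      have := ih (by omega)
      constructor
      · intro h
        rcases hedge with ⟨_, hb⟩ | ⟨ha, _⟩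
        · exact absurd h hb
        · have hk0 : ¬ (k % 2 = 1) := fun hh => ha (this.mpr hh)
          omega
      · intro h
        rcases hedge with ⟨ha, hb⟩ | ⟨ha, hb⟩
        · have : k % 2 = 1 := (ih (by omega)).mp ha
          omega
        · exact hb
  refine ⟨?_, ?_⟩
  · -- counting
    classical
    have hg : ∀ v : Fin n, w.vs (Classical.choose (hw v)) = v := fun v =>
      Classical.choose_spec (hw v)
    set g : Fin n → Fin (w.m + 1) := fun v => Classical.choose (hw v) with hgdef
    have hmaps : ∀ v ∈ Finset.univ.filter (fun v : Fin n => v ≠ ⟨0, by omega⟩),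
        ((g v : Fin (w.m + 1)) : ℕ) / 2 ∈ Finset.range (w.m / 2 + 1) := by
      intro v hv
      simp only [Finset.mem_filter, Finset.mem_univ, true_and] at hv
      have hle : ((g v : Fin (w.m + 1)) : ℕ) ≤ w.m := by omega
      simp only [Finset.mem_range]
      omega
    have hinj : Set.InjOn (fun v : Fin n => ((g v : Fin (w.m + 1)) : ℕ) / 2)
        (Finset.univ.filter (fun v : Fin n => v ≠ ⟨0, by omega⟩)) := by
      intro a ha b hb hab
      simp only [Finset.coe_filter, Set.mem_setOf_eq] at ha hb
      have hea : ((g a : Fin (w.m + 1)) : ℕ) % 2 = 0 := by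
        have := (hpar ((g a : Fin (w.m + 1)) : ℕ) (g a).2).not.mp
        have hne : w.vs ⟨((g a : Fin (w.m + 1)) : ℕ), (g a).2⟩ ≠ ⟨0, by omega⟩ := by
          have : (⟨((g a : Fin (w.m + 1)) : ℕ), (g a).2⟩ : Fin (w.m + 1)) = g a := rfl
          rw [this, hg a]; exact ha.2
        have := (hpar _ (g a).2).not.mp hne
        omega
      have heb : ((g b : Fin (w.m + 1)) : ℕ) % 2 = 0 := by
        have hne : w.vs ⟨((g b : Fin (w.m + 1)) : ℕ), (g b).2⟩ ≠ ⟨0, by omega⟩ := by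
          have : (⟨((g b : Fin (w.m + 1)) : ℕ), (g b).2⟩ : Fin (w.m + 1)) = g b := rfl
          rw [this, hg b]; exact hb.2
        have := (hpar _ (g b).2).not.mp hne
        omega
      have : ((g a : Fin (w.m + 1)) : ℕ) = ((g b : Fin (w.m + 1)) : ℕ) := by
        simp only at hab; omega
      have hgab : g a = g b := Fin.ext this
      rw [← hg a, ← hg b]; exact congrArg w.vs hgab
    have hcard := Finset.card_le_card_of_injOn _ hmaps hinj
    rw [Finset.card_range] at hcard
    have : (Finset.univ.filter (fun v : Fin n => v ≠ ⟨0, by omega⟩)).card = n - 1 := by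
      rw [Finset.filter_ne']
      rw [Finset.card_erase_of_mem (Finset.mem_univ _), Finset.card_univ, Fintype.card_fin]
    rw [this] at hcard
    omega
  · intro i j hij hi hj
    have hsi := (hact _ _).mp (w.steps i)
    have hsj := (hact _ _).mp (w.steps j)
    have hmi : w.ts i % r = 1 % r := by
      rcases hsi.2.2 with ⟨hm, _⟩ | he
      · exact hm
      · exact absurd he hi
    have hmj : w.ts j % r = 1 % r := by
      rcases hsj.2.2 with ⟨hm, _⟩ | he
      · exact hm
      · exact absurd he hj
    have hlt : w.ts i < w.ts j := w.mono (by rw [Fin.lt_iff_val_lt_val]; omega)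
    have hmod : w.ts i ≡ w.ts j [MOD r] := by
      unfold Nat.ModEq; omega
    have hdvd : r ∣ w.ts j - w.ts i := (Nat.modEq_iff_dvd' hlt.le).mp hmod
    have := Nat.le_of_dvd (by omega) hdvd
    omega
end

section
/- A public transport graph on n ≥ 2 vertices whose underlying graph is connected, composed of routes W_1, ..., W_m with periods L_1, ..., L_m, can be explored from any starting vertex by a temporal walk of length at most (2n − 3)·max_i L_i, provided the lifetime is at least this long. -/
/-- Public transport graph hypothesis: the temporal graph `G` is generated by
`m` routes; route `i` consists of edges `W i 1, …, W i (k i)` scheduled at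
strictly increasing timesteps `sched i`, repeated with period `L i` (the
timestep of its last edge). An edge is active at timestep `t` iff it occurs on
some route at a timestep congruent to `t` modulo the period of that route. -/
def IsPublicTransport {V : Type} (G : TemporalGraph V) (m : ℕ) (k : Fin m → ℕ)
    (W : ∀ i : Fin m, Fin (k i) → Sym2 V) (sched : ∀ i : Fin m, Fin (k i) → ℕ)
    (L : Fin m → ℕ) : Prop :=
  (∀ i, 0 < k i) ∧
  (∀ i j, 1 ≤ sched i j) ∧
  (∀ i, StrictMono (sched i)) ∧
  (∀ i (j : Fin (k i)), (j : ℕ) = k i - 1 → L i = sched i j) ∧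
  (∀ t (e : Sym2 V), G.active t e ↔
    (1 ≤ t ∧ t ≤ G.T ∧ ∃ i j, e = W i j ∧ sched i j % L i = t % L i))


open SimpleGraph

section GraphLemmas
variable {V : Type} {G : SimpleGraph V}

/-- crossing lemma -/
lemma crossing {S : Set V} : ∀ {a b : V} (_ : G.Walk a b), a ∈ S → b ∉ S →
    ∃ x u, x ∈ S ∧ u ∉ S ∧ G.Adj x u := by
  intro a b p
  induction p with
  | nil => intro h h'; exact absurd h h'
  | @cons a c b h q ih =>
    intro ha hb
    by_cases hcS : c ∈ S
    · exact ih hcS hb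
    · exact ⟨_, _, ha, hcS, h⟩

lemma insert_detour [DecidableEq V] {v x u : V} (p : G.Walk v v) (hx : x ∈ p.support)
    (hadj : G.Adj x u) :
    ∃ q : G.Walk v v, q.length = p.length + 2 ∧ ∀ y, y ∈ p.support ∨ y = u → y ∈ q.support := by
  refine ⟨(p.takeUntil x hx).append (Walk.cons hadj (Walk.cons hadj.symm (p.dropUntil x hx))),
    ?_, ?_⟩
  · have := congrArg Walk.length (p.take_spec hx)
    simp only [Walk.length_append] at this ⊢
    simp [Walk.length_cons]
    omega
  · intro y hy
    rw [Walk.mem_support_append_iff]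
    rcases hy with hy | rfl
    · rw [← p.take_spec hx, Walk.mem_support_append_iff] at hy
      rcases hy with hy | hy
      · exact Or.inl hy
      · exact Or.inr (by simp [Walk.support_cons, hy])
    · exact Or.inr (by simp [Walk.support_cons])

lemma cover_walk_s9 [Fintype V] [DecidableEq V] (hc : G.Connected) {v : V} :
    ∀ N (p : G.Walk v v), (Finset.univ.filter (· ∉ p.support)).card ≤ N →
    ∃ q : G.Walk v v, (∀ y, y ∈ q.support) ∧ q.length ≤ p.length + 2 * N := by
  intro N
  induction N with
  | zero =>
    intro p hp
    refine ⟨p, fun y => ?_, by omega⟩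
    by_contra hy
    have : y ∈ Finset.univ.filter (· ∉ p.support) := by simp [hy]
    have := Finset.card_pos.mpr ⟨y, this⟩
    omega
  | succ N ih =>
    intro p hp
    by_cases hall : ∀ y, y ∈ p.support
    · exact ⟨p, hall, by omega⟩
    · push_neg at hall
      obtain ⟨u, hu⟩ := hall
      have hv : v ∈ {y | y ∈ p.support} := p.start_mem_support
      obtain ⟨x, w, hx, hw, hadj⟩ := crossing (hc.preconnected v u).some hv hu
      simp only [Set.mem_setOf_eq] at hx hw
      obtain ⟨q, hqlen, hqsup⟩ := insert_detour p hx hadj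
      have hsub : Finset.univ.filter (· ∉ q.support) ⊂ Finset.univ.filter (· ∉ p.support) := by
        constructor
        · intro y hy
          simp only [Finset.mem_filter] at hy ⊢
          exact ⟨hy.1, fun h => hy.2 (hqsup y (Or.inl h))⟩
        · intro hsub'
          have : w ∈ Finset.univ.filter (· ∉ p.support) := by simp [hw]
          have := hsub' this
          simp only [Finset.mem_filter] at this
          exact this.2 (hqsup w (Or.inr rfl))
      have hcard := Finset.card_lt_card hsub
      obtain ⟨r, hr1, hr2⟩ := ih q (by omega)
      exact ⟨r, hr1, by omega⟩

/-- spanning walk of length ≤ 2n-3 -/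
lemma exists_spanning_walk [Fintype V] (hc : G.Connected) (v : V)
    (h2 : 2 ≤ Fintype.card V) :
    ∃ (w : V) (p : G.Walk v w), (∀ y, y ∈ p.support) ∧
      p.length ≤ 2 * Fintype.card V - 3 := by
  classical
  have hcard : (Finset.univ.filter (· ∉ (Walk.nil : G.Walk v v).support)).card ≤
      Fintype.card V - 1 := by
    have : Finset.univ.filter (· ∉ (Walk.nil : G.Walk v v).support) ⊆ Finset.univ \ {v} := by
      intro y hy
      simp only [Finset.mem_filter, Walk.support_nil, List.mem_singleton] at hy
      simp [hy.2]
    calc _ ≤ (Finset.univ \ {v}).card := Finset.card_le_card this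
      _ = Fintype.card V - 1 := by rw [Finset.card_sdiff_of_subset (by simp)]; simp
  obtain ⟨q, hq1, hq2⟩ := cover_walk_s9 hc (Fintype.card V - 1) Walk.nil hcard
  simp only [Walk.length_nil, zero_add] at hq2
  -- q has positive length
  have hqpos : 1 ≤ q.length := by
    by_contra h
    push_neg at h
    interval_cases hql : q.length
    · obtain ⟨u, hu⟩ := Fintype.exists_ne_of_one_lt_card (by omega) v
      have := hq1 u
      rw [Walk.mem_support_iff_exists_getVert] at this
      obtain ⟨i, hi, hile⟩ := this
      rw [hql] at hile
      interval_cases i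
      simp [Walk.getVert_zero] at hi
      exact hu hi.symm
  -- drop the last edge via reverse
  rcases hrev : q.reverse with _ | @⟨_, w, _, hadj, r⟩
  · have := congrArg Walk.length hrev
    rw [Walk.length_reverse, Walk.length_nil] at this
    omega
  · refine ⟨w, r.reverse, ?_, ?_⟩
    · intro y
      have hy : y ∈ q.reverse.support := by
        rw [Walk.support_reverse, List.mem_reverse]; exact hq1 y
      rw [hrev, Walk.support_cons] at hy
      rw [Walk.support_reverse, List.mem_reverse]
      rcases List.mem_cons.mp hy with rfl | hy
      · exact r.end_mem_support
      · exact hy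
    · have := congrArg Walk.length hrev
      simp only [Walk.length_reverse, Walk.length_cons] at this
      rw [Walk.length_reverse]
      omega

end GraphLemmas


open SimpleGraph in
/-- In a public transport graph, any edge of the underlying graph is active in any
window `(a*S, (a+1)*S]` of length `S = sup L`, provided the window fits in the lifetime. -/
lemma window_active {V : Type} (G : TemporalGraph V) (m : ℕ) (k : Fin m → ℕ)
    (W : ∀ i : Fin m, Fin (k i) → Sym2 V) (sched : ∀ i : Fin m, Fin (k i) → ℕ)
    (L : Fin m → ℕ) (hPT : IsPublicTransport G m k W sched L) {e : Sym2 V}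
    (he : ∃ t₀, G.active t₀ e) (a : ℕ)
    (hA : (a + 1) * Finset.univ.sup L ≤ G.T) :
    ∃ t, a * Finset.univ.sup L < t ∧ t ≤ (a + 1) * Finset.univ.sup L ∧ G.active t e := by
  obtain ⟨h1, h2, h3, h4, h5⟩ := hPT
  obtain ⟨t₀, ht₀⟩ := he
  obtain ⟨-, -, i, j, rfl, -⟩ := (h5 t₀ _).mp ht₀
  set S := Finset.univ.sup L with hS
  have hki := h1 i
  have hLi : 0 < L i := by
    have := h4 i ⟨k i - 1, by omega⟩ rfl
    have := h2 i ⟨k i - 1, by omega⟩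
    omega
  have hLiS : L i ≤ S := Finset.le_sup (Finset.mem_univ i)
  set r := sched i j % L i with hr
  have hrlt : r < L i := Nat.mod_lt _ hLi
  set b := a * S with hb
  have hbm : b % L i < L i := Nat.mod_lt _ hLi
  have hble : b % L i ≤ b := Nat.mod_le _ _
  have hkey : b - b % L i = L i * (b / L i) := by
    have := Nat.div_add_mod b (L i)
    omega
  set c := if b % L i < r then r else L i + r with hc
  have hcases : (b % L i < r ∧ c = r) ∨ (r ≤ b % L i ∧ c = L i + r) := by
    rcases lt_or_ge (b % L i) r with h | h
    · exact Or.inl ⟨h, if_pos h⟩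
    · exact Or.inr ⟨h, if_neg (not_lt.mpr h)⟩
  have hgt : b < b - b % L i + c := by
    rcases hcases with ⟨h, hcv⟩ | ⟨h, hcv⟩ <;> omega
  have hle2 : b - b % L i + c ≤ (a + 1) * S := by
    have h2' : (a + 1) * S = b + S := by rw [hb, Nat.succ_mul]
    rcases hcases with ⟨h, hcv⟩ | ⟨h, hcv⟩ <;> omega
  refine ⟨b - b % L i + c, hgt, hle2, ?_⟩
  have htmod : (b - b % L i + c) % L i = r := by
    rw [hkey, Nat.mul_add_mod]
    rcases hcases with ⟨h, hcv⟩ | ⟨h, hcv⟩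
    · rw [hcv]
      exact Nat.mod_eq_of_lt hrlt
    · rw [hcv, Nat.add_mod_left]
      exact Nat.mod_eq_of_lt hrlt
  exact (h5 _ _).mpr ⟨by omega, by omega, i, j, rfl, by rw [htmod]⟩

/-- a public transport graph on `n ≥ 2` vertices with connected
underlying graph and lifetime at least `(2n - 3) · max_i L i` can be explored
from any starting vertex by a temporal walk of length at most
`(2n - 3) · max_i L i`. -/
theorem public_transport_exploration {V : Type} [Fintype V] (G : TemporalGraph V)
    (m n : ℕ) (k : Fin m → ℕ) (W : ∀ i : Fin m, Fin (k i) → Sym2 V)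
    (sched : ∀ i : Fin m, Fin (k i) → ℕ) (L : Fin m → ℕ)
    (hPT : IsPublicTransport G m k W sched L)
    (hn : n = Fintype.card V) (h2 : 2 ≤ n)
    (hconn : G.underlying.Connected)
    (hT : (2 * n - 3) * Finset.univ.sup L ≤ G.T) (v : V) :
    ∃ w : G.TWalk v, w.Explores ∧ w.length ≤ (2 * n - 3) * Finset.univ.sup L := by
  
  classical
  subst hn
  obtain ⟨wEnd, P, hPsup, hPlen⟩ := exists_spanning_walk hconn v h2
  set n := Fintype.card V with hn
  set S := Finset.univ.sup L with hS
  have hstep : ∀ i : Fin P.length, ∃ t, (i : ℕ) * S < t ∧ t ≤ ((i : ℕ) + 1) * S ∧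
      G.active t s(P.getVert i, P.getVert (i + 1)) := by
    intro i
    have hadj := P.adj_getVert_succ i.isLt
    obtain ⟨-, t₀, -, ht₀⟩ := (show _ ∧ _ from hadj)
    refine window_active G m k W sched L hPT ⟨t₀, ht₀⟩ i ?_
    refine le_trans (Nat.mul_le_mul_right _ ?_) hT
    have := i.isLt
    omega
  choose ts hts1 hts2 hts3 using hstep
  refine ⟨⟨P.length, fun i => P.getVert i, ts, ?_, ?_, ?_, ?_, ?_⟩, ?_, ?_⟩
  · simp [SimpleGraph.Walk.getVert_zero]
  · intro i j hij
    calc ts i ≤ ((i : ℕ) + 1) * S := hts2 i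
      _ ≤ (j : ℕ) * S := Nat.mul_le_mul_right _ (by exact_mod_cast hij)
      _ < ts j := hts1 j
  · intro i
    exact Nat.lt_of_le_of_lt (Nat.zero_le _) (hts1 i)
  · intro i
    refine le_trans (hts2 i) (le_trans (Nat.mul_le_mul_right _ ?_) hT)
    have := i.isLt
    omega
  · intro i
    have := hts3 i
    simpa using this
  · intro u
    obtain ⟨iN, hiN, hile⟩ := SimpleGraph.Walk.mem_support_iff_exists_getVert.mp (hPsup u)
    exact ⟨⟨iN, by show iN < P.length + 1; omega⟩, hiN⟩
  · refine Finset.sup_le fun i _ => ?_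
    refine le_trans (hts2 i) (Nat.mul_le_mul_right _ ?_)
    have hi' : (i : ℕ) < P.length := i.isLt
    omega
end

section
/- In a broadcast network, if v is a vertex active at timesteps t and t' with t < t' and inactive strictly between them, and u_1, u_2, ..., u_ℓ is a path in the underlying graph starting at a neighbour u_1 of v, then the number of timesteps in [t+1, t'−1] at which u_i is active is at most i for each i; in particular any neighbour of v is active at most once strictly between consecutive activations of v. -/
/-- A broadcast network: a static graph `H` together with, for each timestep
`t ∈ [1, T]`, a set of active (broadcasting) vertices `A t`; a vertex active at
two timesteps `t₁ < t₂` requires each of its neighbours to be active at some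
timestep in `[t₁, t₂ - 1]`. -/
structure BroadcastNetwork (V : Type) where
  T : ℕ
  H : SimpleGraph V
  A : ℕ → V → Prop
  sync : ∀ v t₁ t₂, 1 ≤ t₁ → t₂ ≤ T → t₁ < t₂ → A t₁ v → A t₂ v →
    ∀ u, H.Adj v u → ∃ s ∈ Finset.Icc t₁ (t₂ - 1), A s u

namespace BroadcastNetwork

variable {V : Type}

/-- Vertex `v` has frequency at most `f`: it is active at least once in every
window of `f` consecutive timesteps within `[1, T]`. -/
def VFreqLE (B : BroadcastNetwork V) (v : V) (f : ℕ) : Prop :=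
  0 < f ∧ ∀ t, 1 ≤ t → t + f ≤ B.T + 1 → ∃ s ∈ Finset.Ico t (t + f), B.A s v

/-- The snapshot at timestep `t`: edges of `H` with at least one broadcasting
endpoint. -/
def snapshot (B : BroadcastNetwork V) (t : ℕ) : SimpleGraph V where
  Adj u w := B.H.Adj u w ∧ (B.A t u ∨ B.A t w)
  symm := by
    constructor
    intro u w h
    exact ⟨h.1.symm, h.2.symm⟩
  loopless := ⟨fun v h => B.H.loopless.irrefl v h.1⟩

/-- The broadcast network is always connected: every snapshot is connected. -/
def AlwaysConnected (B : BroadcastNetwork V) : Prop :=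
  ∀ t, 1 ≤ t → t ≤ B.T → (B.snapshot t).Connected

/-- A temporal walk in a broadcast network: each step moves along an edge of
`H` one of whose traversal is available because its tail is broadcasting. -/
structure BWalk (B : BroadcastNetwork V) (start : V) where
  m : ℕ
  vs : Fin (m + 1) → V
  ts : Fin m → ℕ
  start_eq : vs 0 = start
  mono : StrictMono ts
  time_ge : ∀ i, 1 ≤ ts i
  time_le : ∀ i, ts i ≤ B.T
  steps : ∀ i : Fin m, B.H.Adj (vs i.castSucc) (vs i.succ) ∧ B.A (ts i) (vs i.castSucc)

/-- A walk explores the network if it visits every vertex. -/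
def BWalk.Explores {B : BroadcastNetwork V} {start : V} (w : B.BWalk start) : Prop :=
  Function.Surjective w.vs

/-- The length of a walk: its final timestep. -/
def BWalk.length {B : BroadcastNetwork V} {start : V} (w : B.BWalk start) : ℕ :=
  Finset.univ.sup w.ts

end BroadcastNetwork


open Classical in
noncomputable def actF {V : Type} (B : BroadcastNetwork V) (a b : ℕ) (x : V) : Finset ℕ :=
  (Finset.Icc a b).filter (fun s => B.A s x)

lemma actF_key {V : Type} (B : BroadcastNetwork V) (t t' : ℕ) (ht : 1 ≤ t)
    (ht' : t' ≤ B.T) (htt : t < t') (x w : V) (hadj : B.H.Adj w x) :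
    (actF B (t+1) (t'-1) w).card ≤ (actF B (t+1) (t'-1) x).card + 1 := by
  classical
  set S := actF B (t+1) (t'-1) w with hS
  set X := actF B (t+1) (t'-1) x with hX
  by_cases hne : S.Nonempty
  · set m := S.max' hne with hm
    have hmemS : ∀ {s}, s ∈ S → t + 1 ≤ s ∧ s ≤ t' - 1 ∧ B.A s w := by
      intro s hs
      simp only [hS, actF, Finset.mem_filter, Finset.mem_Icc] at hs
      exact ⟨hs.1.1, hs.1.2, hs.2⟩
    have hmemX : ∀ {s}, t + 1 ≤ s → s ≤ t' - 1 → B.A s x → s ∈ X := by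
      intro s h1 h2 h3
      simp only [hX, actF, Finset.mem_filter, Finset.mem_Icc]
      exact ⟨⟨h1, h2⟩, h3⟩
    -- for s in S.erase m, the set of later elements of S is nonempty
    have hlater : ∀ s ∈ S.erase m, ((S.filter (fun r => s < r))).Nonempty := by
      intro s hs
      rcases Finset.mem_erase.mp hs with ⟨hne', hsS⟩
      refine ⟨m, Finset.mem_filter.mpr ⟨S.max'_mem hne, ?_⟩⟩
      exact lt_of_le_of_ne (S.le_max' s hsS) hne'
    -- witness function
    have hwit : ∀ s (hs : s ∈ S.erase m), ∃ r,
        r ∈ Finset.Icc s ((S.filter (fun r => s < r)).min' (hlater s hs) - 1) ∧ B.A r x := by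
      intro s hs
      have hsS : s ∈ S := (Finset.mem_erase.mp hs).2
      set n := (S.filter (fun r => s < r)).min' (hlater s hs) with hn
      have hnmem : n ∈ S.filter (fun r => s < r) := Finset.min'_mem _ _
      have hnS : n ∈ S := (Finset.mem_filter.mp hnmem).1
      have hsn : s < n := (Finset.mem_filter.mp hnmem).2
      obtain ⟨h1s, h2s, hAs⟩ := hmemS hsS
      obtain ⟨h1n, h2n, hAn⟩ := hmemS hnS
      have h1 : 1 ≤ s := le_trans (by omega) h1s
      have h2 : n ≤ B.T := by omega
      exact B.sync w s n h1 h2 hsn hAs hAn x hadj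
    have hcard : (S.erase m).card ≤ X.card := by
      refine Finset.card_le_card_of_injOn
        (fun s => if h : s ∈ S.erase m then Classical.choose (hwit s h) else 0) ?_ ?_
      · intro s hs
        have hs : s ∈ S.erase m := hs
        simp only [hs, dif_pos]
        obtain ⟨hr, hAr⟩ := Classical.choose_spec (hwit s hs)
        set r := Classical.choose (hwit s hs)
        rw [Finset.mem_Icc] at hr
        have hsS : s ∈ S := (Finset.mem_erase.mp hs).2
        obtain ⟨h1s, h2s, _⟩ := hmemS hsS
        have hnmem := Finset.min'_mem (S.filter (fun r => s < r)) (hlater s hs)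
        have hnS := (Finset.mem_filter.mp hnmem).1
        obtain ⟨_, h2n, _⟩ := hmemS hnS
        exact hmemX (le_trans h1s hr.1) (by omega) hAr
      · -- injectivity via strict monotonicity
        have hmono : ∀ s₁ ∈ S.erase m, ∀ s₂ ∈ S.erase m, s₁ < s₂ →
            (if h : s₁ ∈ S.erase m then Classical.choose (hwit s₁ h) else 0) <
            (if h : s₂ ∈ S.erase m then Classical.choose (hwit s₂ h) else 0) := by
          intro s₁ h₁ s₂ h₂ hlt
          simp only [h₁, h₂, dif_pos]
          obtain ⟨hr₁, _⟩ := Classical.choose_spec (hwit s₁ h₁)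
          obtain ⟨hr₂, _⟩ := Classical.choose_spec (hwit s₂ h₂)
          rw [Finset.mem_Icc] at hr₁ hr₂
          set n₁ := (S.filter (fun r => s₁ < r)).min' (hlater s₁ h₁) with hn₁
          have hs₂S : s₂ ∈ S := (Finset.mem_erase.mp h₂).2
          have hn₁le : n₁ ≤ s₂ := Finset.min'_le _ _ (Finset.mem_filter.mpr ⟨hs₂S, hlt⟩)
          have hn₁pos : s₁ < n₁ :=
            (Finset.mem_filter.mp (Finset.min'_mem (S.filter (fun r => s₁ < r)) (hlater s₁ h₁))).2
          omega
        intro s₁ h₁ s₂ h₂ heq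
        by_contra hne'
        rcases lt_or_gt_of_ne hne' with h | h
        · exact absurd heq (Nat.ne_of_lt (hmono s₁ h₁ s₂ h₂ h))
        · exact absurd heq.symm (Nat.ne_of_lt (hmono s₂ h₂ s₁ h₁ h))
    have : (S.erase m).card = S.card - 1 := Finset.card_erase_of_mem (S.max'_mem hne)
    have hS1 : 1 ≤ S.card := Finset.card_pos.mpr hne
    omega
  · simp [Finset.not_nonempty_iff_eq_empty.mp hne]


/-- if `v` is active at timesteps `t < t'` and inactive strictly
between them, and `u 0, u 1, …, u (ℓ-1)` is a path in the underlying graph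
with `u 0` a neighbour of `v`, then `u i` is active at most `i + 1` times in
`[t+1, t'-1]`; in particular any neighbour of `v` is active at most once
strictly between consecutive activations of `v`. -/
theorem broadcast_path_activation_bound {V : Type} (B : BroadcastNetwork V)
    (v : V) (t t' : ℕ) (ht : 1 ≤ t) (ht' : t' ≤ B.T) (htt : t < t')
    (hv : B.A t v) (hv' : B.A t' v) (hgap : ∀ s, t < s → s < t' → ¬ B.A s v)
    (ℓ : ℕ) (u : Fin ℓ → V)
    (hstart : ∀ h0 : 0 < ℓ, B.H.Adj v (u ⟨0, h0⟩))
    (hpath : ∀ (i : Fin ℓ) (hi : (i : ℕ) + 1 < ℓ), B.H.Adj (u i) (u ⟨(i : ℕ) + 1, hi⟩)) :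
    (∀ i : Fin ℓ,
      {s : ℕ | s ∈ Set.Icc (t + 1) (t' - 1) ∧ B.A s (u i)}.ncard ≤ (i : ℕ) + 1) ∧
    (∀ u' : V, B.H.Adj v u' →
      {s : ℕ | s ∈ Set.Icc (t + 1) (t' - 1) ∧ B.A s u'}.ncard ≤ 1) := by
  classical
  have hsetF : ∀ x : V, {s : ℕ | s ∈ Set.Icc (t + 1) (t' - 1) ∧ B.A s x}.ncard
      = (actF B (t+1) (t'-1) x).card := by
    intro x
    rw [← Set.ncard_coe_finset]
    congr 1
    ext s
    simp [actF, Set.mem_Icc]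
  have hvempty : (actF B (t+1) (t'-1) v).card = 0 := by
    rw [Finset.card_eq_zero]
    ext s
    simp only [actF, Finset.mem_filter, Finset.mem_Icc, Finset.notMem_empty, iff_false, not_and]
    rintro ⟨h1, h2⟩ hA
    exact hgap s (by omega) (by omega) hA
  constructor
  · have main : ∀ n (hn : n < ℓ), (actF B (t+1) (t'-1) (u ⟨n, hn⟩)).card ≤ n + 1 := by
      intro n
      induction n with
      | zero =>
        intro hn
        have h := actF_key B t t' ht ht' htt v (u ⟨0, hn⟩) (hstart hn).symm
        omega
      | succ k ih =>
        intro hn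
        have hk : k < ℓ := by omega
        have hadj : B.H.Adj (u ⟨k + 1, hn⟩) (u ⟨k, hk⟩) := (hpath ⟨k, hk⟩ hn).symm
        have h := actF_key B t t' ht ht' htt (u ⟨k, hk⟩) (u ⟨k + 1, hn⟩) hadj
        have h2 := ih hk
        omega
    intro i
    rw [hsetF]
    have h := main i i.isLt
    simpa using h
  · intro u' hadj
    rw [hsetF]
    have h := actF_key B t t' ht ht' htt v u' hadj.symm
    omega
end

section
/- For every f ≥ 1 and n ≥ 3 there exists an f-frequent temporal graph on n vertices and a starting vertex such that every exploring temporal walk from that vertex has length at least f(2n − 5) + 1. -/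
namespace FreqLB

def starActive (f n : ℕ) [NeZero n] (t : ℕ) (e : Sym2 (Fin n)) : Prop :=
  ∃ v : Fin n, v ≠ 0 ∧ e = s(0, v) ∧ (t % f = 1 % f ∨ v = 1)

def starG (f n : ℕ) [NeZero n] : TemporalGraph (Fin n) :=
  ⟨f * (2 * n - 5) + 1, starActive f n⟩

def starVS (n : ℕ) [NeZero n] (hn : 3 ≤ n) : Fin (2 * n - 4 + 1) → Fin n :=
  fun j => if j.val = 0 then 1 else if j.val % 2 = 1 then 0
    else ⟨j.val / 2 + 1, by have := j.isLt; omega⟩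

lemma explorer (f n : ℕ) [NeZero n] (hf : 1 ≤ f) (hn : 3 ≤ n) :
    ∃ w : (starG f n).TWalk 1, w.Explores := by
  have hv1 : (1 : Fin n).val = 1 := by rw [Fin.val_one']; exact Nat.mod_eq_of_lt (by omega)
  have hv0 : (0 : Fin n).val = 0 := rfl
  have h10 : (1 : Fin n) ≠ 0 := by rw [Ne, Fin.ext_iff, hv1, hv0]; omega
  refine ⟨⟨2 * n - 4, starVS n hn, fun i => f * i.val + 1, ?_, ?_, ?_, ?_, ?_⟩, ?_⟩
  · simp [starVS]
  · intro i j hij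
    simp only
    have h1 : i.val + 1 ≤ j.val := hij
    have h2 : f * (i.val + 1) ≤ f * j.val := Nat.mul_le_mul_left f h1
    rw [Nat.mul_add, Nat.mul_one] at h2
    omega
  · exact fun i => Nat.succ_le_succ (Nat.zero_le _)
  · intro i
    show f * i.val + 1 ≤ f * (2 * n - 5) + 1
    have h1 : i.val ≤ 2 * n - 5 := by have := i.isLt; omega
    have h2 := Nat.mul_le_mul_left f h1
    omega
  · intro i
    have hisucc : (i.succ : Fin (2 * n - 4 + 1)).val = i.val + 1 := rfl
    have hicast : (i.castSucc : Fin (2 * n - 4 + 1)).val = i.val := rfl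
    show starActive f n _ _
    simp only [starVS, hisucc, hicast]
    rcases Nat.eq_zero_or_pos i.val with h0 | h0
    · refine ⟨1, h10, ?_, Or.inr rfl⟩
      rw [if_pos h0, if_neg (by omega), if_pos (by omega)]
      exact Sym2.eq_swap
    · rcases Nat.even_or_odd i.val with he | ho
      · have h2 : i.val % 2 = 0 := Nat.even_iff.mp he
        refine ⟨⟨i.val / 2 + 1, by have := i.isLt; omega⟩,
          by rw [Ne, Fin.ext_iff, hv0]; simp, ?_, Or.inl (by rw [Nat.mul_add_mod])⟩
        rw [if_neg (by omega), if_neg (by omega), if_neg (by omega), if_pos (by omega)]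
        exact Sym2.eq_swap
      · have h2 : i.val % 2 = 1 := Nat.odd_iff.mp ho
        refine ⟨⟨(i.val + 1) / 2 + 1, by have := i.isLt; omega⟩,
          by rw [Ne, Fin.ext_iff, hv0]; simp, ?_, Or.inl (by rw [Nat.mul_add_mod])⟩
        rw [if_neg (by omega), if_pos (by omega), if_neg (by omega), if_neg (by omega)]
  · show Function.Surjective (starVS n hn)
    intro v
    rcases eq_or_ne v 1 with rfl | hv1'
    · exact ⟨0, by simp [starVS]⟩
    rcases eq_or_ne v 0 with rfl | hv0'
    · refine ⟨⟨1, by omega⟩, ?_⟩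
      simp [starVS]
    · have hval : 2 ≤ v.val := by
        have h0 : v.val ≠ 0 := fun h => hv0' (Fin.ext (by rw [h, hv0]))
        have h1 : v.val ≠ 1 := fun h => hv1' (Fin.ext (by rw [h, hv1]))
        omega
      refine ⟨⟨2 * (v.val - 1), by have := v.isLt; omega⟩, ?_⟩
      have hh := v.isLt
      simp only [starVS]
      rw [if_neg (by show ¬(2 * (v.val - 1) = 0); omega), if_neg (by show ¬(2 * (v.val - 1) % 2 = 1); omega)]
      apply Fin.ext
      simp only
      omega

end FreqLB

namespace FreqLB


lemma exists_mod_window (f t : ℕ) (hf : 1 ≤ f) (ht : 1 ≤ t) :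
    ∃ s, t ≤ s ∧ s < t + f ∧ s % f = 1 % f := by
  rcases Nat.eq_zero_or_pos ((t - 1) % f) with h | h
  · refine ⟨t, le_refl _, by omega, ?_⟩
    have h1 := Nat.div_add_mod (t - 1) f
    obtain ⟨a, ha⟩ : ∃ a, f * ((t - 1) / f) = a := ⟨_, rfl⟩
    rw [ha] at h1
    have ht' : t = f * ((t - 1) / f) + 1 := by rw [ha]; omega
    rw [ht', Nat.mul_add_mod]
  · refine ⟨f * ((t - 1) / f + 1) + 1, ?_, ?_, by rw [Nat.mul_add_mod]⟩ <;>
    · have h1 := Nat.div_add_mod (t - 1) f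
      have h2 : (t - 1) % f < f := Nat.mod_lt _ (by omega)
      rw [Nat.mul_add, Nat.mul_one]
      obtain ⟨a, ha⟩ : ∃ a, f * ((t - 1) / f) = a := ⟨_, rfl⟩
      rw [ha] at h1 ⊢
      omega

lemma key_count (f k : ℕ) (hf : 1 ≤ f) (hk : 1 ≤ k) (S : Finset ℕ)
    (hmod : ∀ x ∈ S, x % f = 1 % f) (h2 : ∀ x ∈ S, 2 ≤ x) (hcard : k ≤ S.card) :
    ∃ x ∈ S, f * k + 1 ≤ x := by
  by_contra hcon
  push_neg at hcon
  have hdvd : ∀ x ∈ S, f ∣ x - 1 := by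
    intro x hx
    exact (Nat.modEq_iff_dvd' (by have := h2 x hx; omega)).mp ((hmod x hx).symm)
  have hrep : ∀ x ∈ S, 1 ≤ (x - 1) / f ∧ x = f * ((x - 1) / f) + 1 ∧ (x - 1) / f < k := by
    intro x hx
    obtain ⟨q, hq⟩ := hdvd x hx
    have hx2 := h2 x hx
    have hq1 : 1 ≤ q := by
      rcases Nat.eq_zero_or_pos q with h | h
      · rw [h, Nat.mul_zero] at hq; omega
      · exact h
    have hdq : (x - 1) / f = q := by rw [hq, Nat.mul_div_cancel_left q (by omega : 0 < f)]
    have hxe : x = f * q + 1 := by rw [← hq]; omega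
    have hlt : q < k := by
      have h3 := hcon x hx
      rw [hxe] at h3
      have h4 : f * q < f * k := by omega
      exact Nat.lt_of_mul_lt_mul_left h4
    rw [hdq]
    exact ⟨hq1, hxe, hlt⟩
  have hinj : Set.InjOn (fun x => (x - 1) / f) S := by
    intro x hx y hy hxy
    have e1 := (hrep x hx).2.1
    have e2 := (hrep y hy).2.1
    simp only at hxy
    rw [e1, e2, hxy]
  have himg : k ≤ (S.image (fun x => (x - 1) / f)).card := by
    rw [Finset.card_image_of_injOn hinj]; exact hcard
  have hsub : S.image (fun x => (x - 1) / f) ⊆ Finset.Ico 1 k := by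
    intro q hq
    obtain ⟨x, hx, hxq⟩ := Finset.mem_image.mp hq
    rw [Finset.mem_Ico, ← hxq]
    exact ⟨(hrep x hx).1, (hrep x hx).2.2⟩
  have := Finset.card_le_card hsub
  rw [Nat.card_Ico] at this
  omega

lemma star_freq (f n : ℕ) [NeZero n] (hf : 1 ≤ f) (u v : Fin n)
    (h : (starG f n).underlying.Adj u v) : (starG f n).FreqLE s(u, v) f := by
  change u ≠ v ∧ ∃ t ∈ Finset.Icc 1 (starG f n).T, (starG f n).active t s(u, v) at h
  obtain ⟨hne, t, ht, hact⟩ := h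
  obtain ⟨x, hx0, hedge, -⟩ := hact
  refine ⟨hf, fun t' ht1 ht2 => ?_⟩
  obtain ⟨s, hs1, hs2, hs3⟩ := exists_mod_window f t' hf ht1
  exact ⟨s, Finset.mem_Ico.mpr ⟨hs1, hs2⟩, x, hx0, hedge, Or.inl hs3⟩

lemma lower_bound (f n : ℕ) [NeZero n] (hf : 1 ≤ f) (hn : 3 ≤ n)
    (w : (starG f n).TWalk 1) (hw : w.Explores) :
    f * (2 * n - 5) + 1 ≤ w.length := by
  have hv1 : (1 : Fin n).val = 1 := by rw [Fin.val_one']; exact Nat.mod_eq_of_lt (by omega)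
  have hv0 : (0 : Fin n).val = 0 := rfl
  have h10 : (1 : Fin n) ≠ 0 := by rw [Ne, Fin.ext_iff, hv1, hv0]; omega
  -- step analysis
  have hstep : ∀ i : Fin w.m, ∃ v : Fin n, v ≠ 0 ∧
      ((w.vs i.castSucc = 0 ∧ w.vs i.succ = v) ∨ (w.vs i.castSucc = v ∧ w.vs i.succ = 0)) ∧
      (w.ts i % f = 1 % f ∨ v = 1) := by
    intro i
    obtain ⟨v, hv, he, ht⟩ := w.steps i
    rw [Sym2.eq_iff] at he
    exact ⟨v, hv, he, ht⟩
  choose ℓ hne hep hmod using hstep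
  -- the set of steps on non-start leaf edges
  classical
  set L : Finset (Fin w.m) := Finset.univ.filter (fun i => ℓ i ≠ 1) with hLdef
  -- each such step has time ≡ 1 mod f and ≥ 2
  have hLprop : ∀ i ∈ L, w.ts i % f = 1 % f ∧ 2 ≤ w.ts i := by
    intro i hi
    have hi1 : ℓ i ≠ 1 := by simpa [hLdef] using hi
    have hmod' : w.ts i % f = 1 % f := (hmod i).resolve_right hi1
    have hpos : 1 ≤ i.val := by
      by_contra h
      have h0 : i.val = 0 := by omega
      have hc : (i.castSucc : Fin (w.m + 1)) = 0 := Fin.ext h0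
      have hvs : w.vs i.castSucc = 1 := by rw [hc, w.start_eq]
      rcases hep i with ⟨h1, -⟩ | ⟨h1, -⟩
      · exact h10 (hvs ▸ h1)
      · exact hi1 (by rw [← h1, hvs])
    have hlt : (⟨0, by omega⟩ : Fin w.m) < i := hpos
    have := w.mono hlt
    have := w.time_ge ⟨0, by omega⟩
    exact ⟨hmod', by omega⟩
  -- for a non-startвертex appearing at an interior position, two steps
  have hend : ∀ (j : Fin (w.m + 1)) (v : Fin n), v ≠ 0 → w.vs j = v → j ≠ 0 →
      ∃ i : Fin w.m, i.val = j.val - 1 ∧ ℓ i = v := by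
    intro j v hv0' hvj hj0
    have hj1 : 1 ≤ j.val := by
      rcases Nat.eq_zero_or_pos j.val with h | h
      · exact absurd (Fin.ext h) hj0
      · exact h
    have hjm : j.val ≤ w.m := by have := j.isLt; omega
    refine ⟨⟨j.val - 1, by omega⟩, rfl, ?_⟩
    have hsucc : (⟨j.val - 1, by omega⟩ : Fin w.m).succ = j := by
      apply Fin.ext
      simp [Fin.val_succ]
      omega
    have h3 := congrArg w.vs hsucc
    rw [hvj] at h3
    rcases hep ⟨j.val - 1, by omega⟩ with ⟨-, h2⟩ | ⟨-, h2⟩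
    · exact h2.symm.trans h3
    · exact absurd (h3 ▸ h2.symm ▸ rfl : w.vs _ = (0:Fin n)) (h3 ▸ hv0')
  have hstart2 : ∀ (j : Fin (w.m + 1)) (v : Fin n), v ≠ 0 → w.vs j = v → j ≠ Fin.last w.m →
      ∃ i : Fin w.m, i.val = j.val ∧ ℓ i = v := by
    intro j v hv0' hvj hjl
    have hjm : j.val < w.m := by
      have := j.isLt
      have : j.val ≠ w.m := fun h => hjl (Fin.ext h)
      omega
    refine ⟨⟨j.val, hjm⟩, rfl, ?_⟩
    have hcast : (⟨j.val, hjm⟩ : Fin w.m).castSucc = j := Fin.ext rfl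
    have h3 := congrArg w.vs hcast
    rw [hvj] at h3
    rcases hep ⟨j.val, hjm⟩ with ⟨h1, -⟩ | ⟨h1, -⟩
    · exact absurd (h3.symm.trans h1) hv0'
    · exact (h3.symm.trans h1).symm
  -- fibers
  set leaves : Finset (Fin n) := ({0, 1} : Finset (Fin n))ᶜ with hldef
  have hmem : ∀ i ∈ L, ℓ i ∈ leaves := by
    intro i hi
    have hi1 : ℓ i ≠ 1 := by simpa [hLdef] using hi
    simp [hldef, hne i, hi1]
  have hcardleaves : leaves.card = n - 2 := by
    rw [hldef, Finset.card_compl, Fintype.card_fin]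
    rw [Finset.card_insert_of_notMem (by simp [h10.symm]), Finset.card_singleton]
  set last : Fin n := w.vs (Fin.last w.m) with hlast
  have hfib1 : ∀ v ∈ leaves, 1 ≤ (L.filter (fun i => ℓ i = v)).card := by
    intro v hv
    have hv0' : v ≠ 0 := by simp [hldef] at hv; exact hv.1
    have hv1' : v ≠ 1 := by simp [hldef] at hv; exact hv.2
    obtain ⟨j, hj⟩ := hw v
    have hj0 : j ≠ 0 := by
      intro h; rw [h, w.start_eq] at hj; exact hv1' hj.symm
    obtain ⟨i, -, hi⟩ := hend j v hv0' hj hj0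
    exact Finset.card_pos.mpr ⟨i, Finset.mem_filter.mpr ⟨Finset.mem_filter.mpr ⟨Finset.mem_univ _, hi ▸ hv1'⟩, hi⟩⟩
  have hfib2 : ∀ v ∈ leaves, v ≠ last → 2 ≤ (L.filter (fun i => ℓ i = v)).card := by
    intro v hv hvlast
    have hv0' : v ≠ 0 := by simp [hldef] at hv; exact hv.1
    have hv1' : v ≠ 1 := by simp [hldef] at hv; exact hv.2
    obtain ⟨j, hj⟩ := hw v
    have hj0 : j ≠ 0 := by
      intro h; rw [h, w.start_eq] at hj; exact hv1' hj.symm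
    have hjl : j ≠ Fin.last w.m := by
      intro h; rw [h] at hj; exact hvlast (hlast ▸ hj.symm)
    obtain ⟨i1, hi1v, hi1⟩ := hend j v hv0' hj hj0
    obtain ⟨i2, hi2v, hi2⟩ := hstart2 j v hv0' hj hjl
    have hne12 : i1 ≠ i2 := by
      intro h
      rw [h] at hi1v
      have hj1 : 1 ≤ j.val := by
        rcases Nat.eq_zero_or_pos j.val with h' | h'
        · exact absurd (Fin.ext h') hj0
        · exact h'
      omega
    exact Finset.one_lt_card.mpr
      ⟨i1, Finset.mem_filter.mpr ⟨Finset.mem_filter.mpr ⟨Finset.mem_univ _, hi1 ▸ hv1'⟩, hi1⟩,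
       i2, Finset.mem_filter.mpr ⟨Finset.mem_filter.mpr ⟨Finset.mem_univ _, hi2 ▸ hv1'⟩, hi2⟩, hne12⟩
  -- counting
  have hLcard : 2 * n - 5 ≤ L.card := by
    rw [Finset.card_eq_sum_card_fiberwise hmem]
    by_cases hl : last ∈ leaves
    · rw [← Finset.sum_erase_add _ _ hl]
      have h1 := Finset.card_nsmul_le_sum (leaves.erase last)
        (fun v => (L.filter (fun i => ℓ i = v)).card) 2
        (fun v hv => hfib2 v (Finset.mem_of_mem_erase hv) (Finset.ne_of_mem_erase hv))
      have h2 := hfib1 last hl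
      have h3 : (leaves.erase last).card = n - 3 := by
        rw [Finset.card_erase_of_mem hl, hcardleaves]; omega
      rw [h3, smul_eq_mul] at h1
      omega
    · have h1 := Finset.card_nsmul_le_sum leaves
        (fun v => (L.filter (fun i => ℓ i = v)).card) 2
        (fun v hv => hfib2 v hv (fun h => hl (h ▸ hv)))
      rw [hcardleaves, smul_eq_mul] at h1
      omega
  -- conclude via times
  have hk : 1 ≤ 2 * n - 5 := by omega
  set S : Finset ℕ := L.image w.ts with hSdef
  have hScard : 2 * n - 5 ≤ S.card := by
    rw [hSdef, Finset.card_image_of_injective L w.mono.injective]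
    exact hLcard
  obtain ⟨x, hxS, hxge⟩ := key_count f (2 * n - 5) hf hk S
    (fun x hx => by
      obtain ⟨i, hi, rfl⟩ := Finset.mem_image.mp hx
      exact (hLprop i hi).1)
    (fun x hx => by
      obtain ⟨i, hi, rfl⟩ := Finset.mem_image.mp hx
      exact (hLprop i hi).2)
    hScard
  obtain ⟨i, hi, rfl⟩ := Finset.mem_image.mp hxS
  exact le_trans hxge (Finset.le_sup (Finset.mem_univ i))

end FreqLB

/-- for every `f ≥ 1` and `n ≥ 3` there is an `f`-frequent
temporal graph on `n` vertices and a starting vertex such that the graph is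
explorable, but every exploring temporal walk from that vertex has length at
least `f(2n - 5) + 1`. -/
theorem frequent_lower_bound (f n : ℕ) (hf : 1 ≤ f) (hn : 3 ≤ n) :
    ∃ G : TemporalGraph (Fin n),
      (∀ u v : Fin n, G.underlying.Adj u v → G.FreqLE s(u, v) f) ∧
      ∃ start : Fin n,
        (∃ w : G.TWalk start, w.Explores) ∧
        ∀ w : G.TWalk start, w.Explores → f * (2 * n - 5) + 1 ≤ w.length := by

  haveI : NeZero n := ⟨by omega⟩
  exact ⟨FreqLB.starG f n, fun u v h => FreqLB.star_freq f n hf u v h, 1,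
    FreqLB.explorer f n hf hn, fun w hw => FreqLB.lower_bound f n hf hn w hw⟩
end
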